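/- Let f : H₁ × H₂ → ℝ be continuously differentiable on Hilbert spaces H₁, H₂, with ∇_u f being L_u-Lipschitz in u (for fixed v) and L_{uv}-Lipschitz in v (for fixed u), and ∇_v f being L_v-Lipschitz in v (for fixed u) and L_{vu}-Lipschitz in u (for fixed v). Let χ = max{L_{uv}, L_{vu}} / √(L_u L_v). Then for all u, u' ∈ H₁ and v, v' ∈ H₂: f(u', v') − f(u, v) ≤ ⟪∇_u f(u,v), u' − u⟫ + ((1+χ)/2) L_u ‖u' − u‖² + ⟪∇_v f(u,v), v' − v⟫ + ((1+χ)/2) L_v ‖v' − v‖². -/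

import Mathlib

open RealInnerProductSpace

lemma descent {H : Type*} [NormedAddCommGroup H] [InnerProductSpace ℝ H] [CompleteSpace H]
    (f : H → ℝ) (g : H → H) (L : ℝ) (hL : 0 ≤ L)
    (hg : ∀ x, HasGradientAt f (g x) x)
    (hLip : ∀ x y, ‖g x - g y‖ ≤ L * ‖x - y‖) (x y : H) :
    f y ≤ f x + ⟪g x, y - x⟫ + L / 2 * ‖y - x‖ ^ 2 := by
  set d := y - x with hd
  have hgc : Continuous g := by
    rw [Metric.continuous_iff]
    intro a ε hε
    rcases eq_or_lt_of_le hL with hL0 | hLpos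
    · exact ⟨1, one_pos, fun b _ => by
        have := hLip b a
        rw [← hL0] at this
        simpa [dist_eq_norm] using lt_of_le_of_lt (by simpa using this) hε⟩
    · refine ⟨ε / L, div_pos hε hLpos, fun b hb => ?_⟩
      rw [dist_eq_norm]
      calc ‖g b - g a‖ ≤ L * ‖b - a‖ := hLip b a
        _ < L * (ε / L) := by
            apply mul_lt_mul_of_pos_left _ hLpos
            rw [← dist_eq_norm]; exact hb
        _ = ε := by field_simp
  have hγ : ∀ t : ℝ, HasDerivAt (fun t : ℝ => x + t • d) d t := fun t => by
    simpa using ((hasDerivAt_id t).smul_const d).const_add x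
  have hφ : ∀ t : ℝ, HasDerivAt (fun t : ℝ => f (x + t • d))
      (⟪g (x + t • d), d⟫) t := fun t => by
    have h1 := ((hg (x + t • d)).hasFDerivAt.comp t (hγ t).hasFDerivAt)
    have := h1.hasDerivAt
    simp [InnerProductSpace.toDual_apply_apply] at this; exact this
  have hcont : Continuous fun t : ℝ => ⟪g (x + t • d), d⟫ := by
    exact (continuous_inner.comp ((hgc.comp (by continuity)).prodMk continuous_const))
  have hint : f (x + (1:ℝ) • d) - f (x + (0:ℝ) • d)
      = ∫ t in (0:ℝ)..1, ⟪g (x + t • d), d⟫ := by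
    rw [intervalIntegral.integral_eq_sub_of_hasDerivAt (fun t _ => hφ t)
      (hcont.intervalIntegrable 0 1)]
  have hbound : ∀ t ∈ Set.Icc (0:ℝ) 1, ⟪g (x + t • d), d⟫ ≤ ⟪g x, d⟫ + L * t * ‖d‖ ^ 2 := by
    intro t ht
    have : ⟪g (x + t • d) - g x, d⟫ ≤ L * t * ‖d‖ ^ 2 := by
      calc ⟪g (x + t • d) - g x, d⟫ ≤ ‖g (x + t • d) - g x‖ * ‖d‖ :=
            real_inner_le_norm _ _
        _ ≤ (L * ‖x + t • d - x‖) * ‖d‖ := by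
            apply mul_le_mul_of_nonneg_right (hLip _ _) (norm_nonneg _)
        _ = L * t * ‖d‖ ^ 2 := by
            rw [show x + t • d - x = t • d by abel, norm_smul,
              Real.norm_eq_abs, abs_of_nonneg ht.1]; ring
    have h2 : ⟪g (x + t • d), d⟫ = ⟪g x, d⟫ + ⟪g (x + t • d) - g x, d⟫ := by
      rw [inner_sub_left]; ring
    linarith
  have hineq : ∫ t in (0:ℝ)..1, ⟪g (x + t • d), d⟫
      ≤ ∫ t in (0:ℝ)..1, (⟪g x, d⟫ + L * t * ‖d‖ ^ 2) := by
    apply intervalIntegral.integral_mono_on zero_le_one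
      (hcont.intervalIntegrable 0 1) (by apply Continuous.intervalIntegrable; continuity)
    exact hbound
  have hval : ∫ t in (0:ℝ)..1, (⟪g x, d⟫ + L * t * ‖d‖ ^ 2)
      = ⟪g x, d⟫ + L / 2 * ‖d‖ ^ 2 := by
    rw [intervalIntegral.integral_add (by apply Continuous.intervalIntegrable; continuity)
      (by apply Continuous.intervalIntegrable; continuity)]
    have : ∫ t in (0:ℝ)..1, L * t * ‖d‖ ^ 2 = L / 2 * ‖d‖ ^ 2 := by
      have : (fun t : ℝ => L * t * ‖d‖ ^ 2) = fun t : ℝ => (L * ‖d‖ ^ 2) * t := by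
        funext t; ring
      rw [this, intervalIntegral.integral_const_mul, integral_id]
      ring
    simp [this]
  simp only [one_smul, zero_smul, add_zero] at hint
  have : f (x + d) - f x ≤ ⟪g x, d⟫ + L / 2 * ‖d‖ ^ 2 := by
    rw [hint]; rw [← hval]; exact hineq
  have hxd : x + d = y := by rw [hd]; abel
  rw [hxd] at this; linarith

/-- Lemma 1: block-smoothness descent lemma for functions of two blocks. -/
theorem stmt_0 {H₁ H₂ : Type*}
    [NormedAddCommGroup H₁] [InnerProductSpace ℝ H₁] [CompleteSpace H₁]
    [NormedAddCommGroup H₂] [InnerProductSpace ℝ H₂] [CompleteSpace H₂]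
    (f : H₁ → H₂ → ℝ) (gu : H₁ → H₂ → H₁) (gv : H₁ → H₂ → H₂)
    (Lu Lv Luv Lvu : ℝ) (hLu : 0 < Lu) (hLv : 0 < Lv)
    (hLuv : 0 ≤ Luv) (hLvu : 0 ≤ Lvu)
    (hgu : ∀ u v, HasGradientAt (fun u' => f u' v) (gu u v) u)
    (hgv : ∀ u v, HasGradientAt (fun v' => f u v') (gv u v) v)
    (hgu_cont : Continuous fun p : H₁ × H₂ => gu p.1 p.2)
    (hgv_cont : Continuous fun p : H₁ × H₂ => gv p.1 p.2)
    (hLipU : ∀ v u u', ‖gu u v - gu u' v‖ ≤ Lu * ‖u - u'‖)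
    (hLipUV : ∀ u v v', ‖gu u v - gu u v'‖ ≤ Luv * ‖v - v'‖)
    (hLipV : ∀ u v v', ‖gv u v - gv u v'‖ ≤ Lv * ‖v - v'‖)
    (hLipVU : ∀ v u u', ‖gv u v - gv u' v‖ ≤ Lvu * ‖u - u'‖)
    (χ : ℝ) (hχ : χ = max Luv Lvu / Real.sqrt (Lu * Lv)) :
    ∀ (u u' : H₁) (v v' : H₂),
      f u' v' - f u v ≤
        ⟪gu u v, u' - u⟫ + (1 + χ) / 2 * Lu * ‖u' - u‖ ^ 2
          + ⟪gv u v, v' - v⟫ + (1 + χ) / 2 * Lv * ‖v' - v‖ ^ 2 := by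
  intro u u' v v'
  have h1 : f u' v ≤ f u v + ⟪gu u v, u' - u⟫ + Lu / 2 * ‖u' - u‖ ^ 2 :=
    descent (fun x => f x v) (fun x => gu x v) Lu hLu.le (fun x => hgu x v)
      (fun x y => hLipU v x y) u u'
  have h2 : f u' v' ≤ f u' v + ⟪gv u' v, v' - v⟫ + Lv / 2 * ‖v' - v‖ ^ 2 :=
    descent (f u') (gv u') Lv hLv.le (hgv u') (hLipV u') v v'
  set a := ‖u' - u‖ with ha
  set b := ‖v' - v‖ with hb
  have ha0 : 0 ≤ a := norm_nonneg _
  have hb0 : 0 ≤ b := norm_nonneg _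
  have hsq : 0 < Real.sqrt (Lu * Lv) := Real.sqrt_pos.mpr (mul_pos hLu hLv)
  have hχ0 : 0 ≤ χ := by
    rw [hχ]; exact div_nonneg (le_trans hLuv (le_max_left _ _)) hsq.le
  have hLvuχ : Lvu ≤ χ * Real.sqrt (Lu * Lv) := by
    rw [hχ, div_mul_cancel₀ _ hsq.ne']
    exact le_max_right _ _
  have hcross : ⟪gv u' v - gv u v, v' - v⟫ ≤ Lvu * a * b := by
    calc ⟪gv u' v - gv u v, v' - v⟫ ≤ ‖gv u' v - gv u v‖ * b := real_inner_le_norm _ _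
      _ ≤ (Lvu * ‖u' - u‖) * b := by
          apply mul_le_mul_of_nonneg_right (hLipVU v u' u) hb0
      _ = Lvu * a * b := by rw [ha]
  have hamgm : Real.sqrt (Lu * Lv) * (a * b) ≤ (Lu * a ^ 2 + Lv * b ^ 2) / 2 := by
    rw [Real.sqrt_mul hLu.le Lv]
    nlinarith [sq_nonneg (Real.sqrt Lu * a - Real.sqrt Lv * b), Real.sq_sqrt hLu.le,
      Real.sq_sqrt hLv.le, Real.sqrt_nonneg Lu, Real.sqrt_nonneg Lv]
  have hcross2 : Lvu * a * b ≤ χ / 2 * (Lu * a ^ 2 + Lv * b ^ 2) := by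
    calc Lvu * a * b ≤ χ * Real.sqrt (Lu * Lv) * (a * b) := by
          rw [mul_assoc]
          exact mul_le_mul_of_nonneg_right hLvuχ (mul_nonneg ha0 hb0)
      _ = χ * (Real.sqrt (Lu * Lv) * (a * b)) := by ring
      _ ≤ χ * ((Lu * a ^ 2 + Lv * b ^ 2) / 2) := mul_le_mul_of_nonneg_left hamgm hχ0
      _ = χ / 2 * (Lu * a ^ 2 + Lv * b ^ 2) := by ring
  have hsplit : ⟪gv u' v, v' - v⟫ = ⟪gv u v, v' - v⟫ + ⟪gv u' v - gv u v, v' - v⟫ := by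
    rw [inner_sub_left]; ring
  linarith
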